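/- Suppose a₁ + a₂ + ⋯ + a_m = n with a_i ≥ 1 for all 1 ≤ i ≤ m. Then the number L(a₁, …, a_m) of primitive necklaces of length n on an m-letter alphabet in which letter i occurs exactly a_i times equals (1/n)·Σ_{ℓ | gcd(a₁,…,a_m)} μ(ℓ)·(n/ℓ)! / ((a₁/ℓ)!·(a₂/ℓ)!⋯(a_m/ℓ)!). -/

import Mathlib

/-- A word (list of letters) is primitive if it is not a nontrivial power `q^r` (`r > 1`)
of a strictly shorter word `q`. -/
def IsPrimitiveWord (s : List ℕ) : Prop :=
  ¬ ∃ (q : List ℕ) (r : ℕ), 1 < r ∧ q.length < s.length ∧ s = (List.replicate r q).flatten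

/-- Necklaces: words up to cyclic rotation. -/
abbrev Necklace : Type := Quotient (List.IsRotated.setoid ℕ)

/-- `o(s)`: the number of odd letters of the word `s`. -/
def oddCount (s : List ℕ) : ℕ := s.countP (fun x => x % 2 = 1)

/-- The number of primitive necklaces of length `n` on the alphabet `{0,…,m-1}` in which
letter `i` occurs exactly `a i` times. -/
noncomputable def primNecklaceCount (n m : ℕ) (a : Fin m → ℕ) : ℕ :=
  Nat.card {x : Necklace // ∃ s : List ℕ, Quotient.mk (List.IsRotated.setoid ℕ) s = x ∧
    s.length = n ∧ (∀ c ∈ s, c < m) ∧ IsPrimitiveWord s ∧ ∀ i : Fin m, s.count (i : ℕ) = a i}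


namespace NeckAux

/-- `r`-fold concatenation of a word. -/
def lpow (q : List ℕ) (r : ℕ) : List ℕ := (List.replicate r q).flatten

@[simp] lemma lpow_zero (q : List ℕ) : lpow q 0 = [] := rfl

lemma lpow_succ (q : List ℕ) (r : ℕ) : lpow q (r+1) = q ++ lpow q r := by
  simp [lpow, List.replicate_succ]

lemma lpow_succ' (q : List ℕ) (r : ℕ) : lpow q (r+1) = lpow q r ++ q := by
  simp [lpow, List.replicate_succ']

@[simp] lemma lpow_one (q : List ℕ) : lpow q 1 = q := by simp [lpow]

@[simp] lemma length_lpow (q : List ℕ) (r : ℕ) : (lpow q r).length = r * q.length := by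
  induction r with
  | zero => simp
  | succ r ih => rw [lpow_succ]; simp [ih, Nat.succ_mul, Nat.add_comm]

@[simp] lemma count_lpow (q : List ℕ) (r i : ℕ) : (lpow q r).count i = r * q.count i := by
  induction r with
  | zero => simp
  | succ r ih => rw [lpow_succ]; simp [ih, Nat.succ_mul, Nat.add_comm]

lemma mem_lpow {q : List ℕ} {r : ℕ} (hr : 0 < r) {c : ℕ} : c ∈ lpow q r ↔ c ∈ q := by
  constructor
  · intro hc
    rcases List.mem_flatten.1 hc with ⟨t, ht, hct⟩
    rwa [(List.eq_of_mem_replicate ht : t = q)] at hct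
  · intro hc
    cases r with
    | zero => omega
    | succ r => rw [lpow_succ]; exact List.mem_append_left _ hc

lemma take_lpow (q : List ℕ) {j e : ℕ} (hje : j ≤ e) :
    (lpow q e).take (j * q.length) = lpow q j := by
  induction j generalizing e with
  | zero => simp
  | succ j ih =>
    cases e with
    | zero => omega
    | succ e =>
      rw [lpow_succ, lpow_succ, Nat.succ_mul, Nat.add_comm (j * q.length), List.take_length_add_append]
      exact congrArg (q ++ ·) (ih (Nat.le_of_succ_le_succ hje))

lemma rotate_lpow (q : List ℕ) {r : ℕ} (hr : 0 < r) : (lpow q r).rotate q.length = lpow q r := by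
  cases r with
  | zero => omega
  | succ r =>
    have h1 : q.length ≤ (lpow q (r+1)).length := by simp [Nat.succ_mul]
    rw [List.rotate_eq_drop_append_take h1, lpow_succ]
    rw [List.drop_append_of_le_length (le_refl _), List.take_append_of_le_length (le_refl _)]
    rw [List.take_length, List.drop_length, List.nil_append, ← lpow_succ', ← lpow_succ]

/-- Every word has a positive rotation period. -/
lemma exists_per (s : List ℕ) : ∃ d, 0 < d ∧ s.rotate d = s := by
  rcases eq_or_ne s [] with rfl | h
  · exact ⟨1, one_pos, by simp⟩
  · exact ⟨s.length, List.length_pos_of_ne_nil h, List.rotate_length s⟩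

/-- The minimal positive rotation period. -/
noncomputable def minPer (s : List ℕ) : ℕ := Nat.find (exists_per s)

lemma minPer_pos (s : List ℕ) : 0 < minPer s := (Nat.find_spec (exists_per s)).1

lemma rotate_minPer (s : List ℕ) : s.rotate (minPer s) = s := (Nat.find_spec (exists_per s)).2

lemma rotate_mul (s : List ℕ) {d : ℕ} (hd : s.rotate d = s) (k : ℕ) : s.rotate (d * k) = s := by
  induction k with
  | zero => simp
  | succ k ih => rw [Nat.mul_succ, ← List.rotate_rotate, ih, hd]

lemma minPer_dvd (s : List ℕ) {k : ℕ} (hk : s.rotate k = s) : minPer s ∣ k := by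
  set d := minPer s with hd
  have h0 : s.rotate (d * (k / d)) = s := rotate_mul s (rotate_minPer s) _
  have h1 : (s.rotate (d * (k / d))).rotate (k % d) = s.rotate k := by
    rw [List.rotate_rotate, Nat.div_add_mod]
  have hmod : s.rotate (k % d) = s := by
    calc s.rotate (k % d) = (s.rotate (d * (k / d))).rotate (k % d) := by rw [h0]
    _ = s.rotate k := h1
    _ = s := hk
  by_contra hdvd
  have hpos : 0 < k % d := Nat.pos_of_ne_zero (fun h => hdvd (Nat.dvd_of_mod_eq_zero h))
  have hlt : k % d < d := Nat.mod_lt _ (minPer_pos s)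
  exact Nat.find_min (exists_per s) hlt ⟨hpos, hmod⟩

lemma minPer_dvd_length (s : List ℕ) : minPer s ∣ s.length :=
  minPer_dvd s (List.rotate_length s)

/-- A word with period `d ∣ n` is the `(n/d)`-th power of its length-`d` prefix. -/
lemma eq_lpow_of_rotate (s : List ℕ) (d : ℕ) (hd : 0 < d) (hdvd : d ∣ s.length)
    (hrot : s.rotate d = s) : s = lpow (s.take d) (s.length / d) := by
  generalize hgen : s.length = n
  rw [hgen] at hdvd
  induction n using Nat.strong_induction_on generalizing s with
  | _ n IH =>
  rcases Nat.eq_zero_or_pos n with rfl | hn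
  · simp_all [List.length_eq_zero_iff.1 hgen]
  have hdn : d ≤ n := Nat.le_of_dvd hn hdvd
  set t := s.take d with ht
  set u := s.drop d with hu
  have hlt : t.length = d := by simp [ht, ← hgen]; omega
  have hsu : s = t ++ u := (List.take_append_drop d s).symm
  have hrot' : u ++ t = s := by
    rw [← List.rotate_eq_drop_append_take (hgen ▸ hdn : d ≤ s.length), hrot]
  have hul : u.length = n - d := by simp [hu, hgen]
  rcases Nat.lt_or_ge u.length d with hud | hud
  · have hdvd' : d ∣ n - d := Nat.dvd_sub hdvd dvd_rfl
    have h0 : n - d = 0 := by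
      by_contra h
      exact absurd (Nat.le_of_dvd (Nat.pos_of_ne_zero h) hdvd') (by omega)
    have hu0 : u = [] := List.length_eq_zero_iff.1 (by omega)
    have hnd : n = d := by omega
    rw [hsu, hu0, hnd, Nat.div_self hd]
    simp
  · -- d ≤ |u| : u is also d-periodic
    have htu : u.take d = t := by
      rw [ht]
      conv_rhs => rw [← hrot', List.take_append_of_le_length hud]
    have hdu : u.drop d ++ t = u := by
      conv_rhs => rw [hu]
      conv_rhs => rw [← hrot', List.drop_append_of_le_length hud]
    have hurot : u.rotate d = u := by
      rw [List.rotate_eq_drop_append_take hud, htu, hdu]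
    have hIH := IH (n - d) (by omega) u hurot (Nat.dvd_sub hdvd dvd_rfl) hul
    rw [htu] at hIH
    obtain ⟨q', rfl⟩ := hdvd
    cases q' with
    | zero => omega
    | succ p =>
      have h2 : d * (p+1) - d = d * p := by simp [Nat.mul_succ]
      have hnd2 : (d*(p+1) - d)/d = p := by rw [h2, Nat.mul_div_cancel_left _ hd]
      have hnd3 : d*(p+1)/d = p+1 := Nat.mul_div_cancel_left _ hd
      rw [hnd2] at hIH
      rw [hsu, hIH, hnd3, lpow_succ]

end NeckAux

namespace NeckAux

lemma take_one_lpow (q : List ℕ) {ℓ : ℕ} (hl : 0 < ℓ) : (lpow q ℓ).take q.length = q := by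
  have := take_lpow q (j := 1) (e := ℓ) hl
  simpa using this

lemma prim_iff (s : List ℕ) (hs : s ≠ []) : IsPrimitiveWord s ↔ minPer s = s.length := by
  have hpos : 0 < s.length := List.length_pos_of_ne_nil hs
  constructor
  · intro hp
    by_contra hne
    have hdvd := minPer_dvd_length s
    have hlt : minPer s < s.length := lt_of_le_of_ne (Nat.le_of_dvd hpos hdvd) hne
    apply hp
    refine ⟨s.take (minPer s), s.length / minPer s, ?_, ?_,
      eq_lpow_of_rotate s (minPer s) (minPer_pos s) hdvd (rotate_minPer s)⟩
    · obtain ⟨c, hc⟩ := hdvd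
      rcases Nat.lt_or_ge c 2 with h | h
      · interval_cases c <;> omega
      · rw [hc, Nat.mul_div_cancel_left _ (minPer_pos s)]; exact h
    · rw [List.length_take]; omega
  · rintro he ⟨q, r, hr, hql, hseq⟩
    have hq0 : q.length ≠ 0 := by
      intro h
      rw [List.length_eq_zero_iff.1 h] at hseq
      simp [lpow] at hseq
      exact hs (by simpa [hseq] using hseq)
    have hrot : s.rotate q.length = s := by
      rw [hseq]; exact rotate_lpow q (by omega)
    have := Nat.le_of_dvd (by omega) (minPer_dvd s hrot)
    omega

lemma minPer_lpow (q : List ℕ) (hq : IsPrimitiveWord q) (hqn : q ≠ []) {ℓ : ℕ} (hl : 0 < ℓ) :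
    minPer (lpow q ℓ) = q.length := by
  have hqpos : 0 < q.length := List.length_pos_of_ne_nil hqn
  set s := lpow q ℓ with hsdef
  have hslen : s.length = ℓ * q.length := by simp [hsdef]
  have hrot : s.rotate q.length = s := rotate_lpow q hl
  have hdvd : minPer s ∣ q.length := minPer_dvd s hrot
  have hdl : minPer s ≤ q.length := Nat.le_of_dvd hqpos hdvd
  set d := minPer s with hddef
  have hdpos : 0 < d := minPer_pos s
  have hq_take : s.take q.length = q := take_one_lpow q hl
  have hsd : s = lpow (s.take d) (s.length / d) :=
    eq_lpow_of_rotate s d hdpos (minPer_dvd_length s) (rotate_minPer s)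
  have htlen : (s.take d).length = d := by
    rw [List.length_take]
    have : d ≤ s.length := by
      rw [hslen]
      calc d ≤ q.length := hdl
      _ ≤ ℓ * q.length := Nat.le_mul_of_pos_left _ hl
    omega
  obtain ⟨c, hc⟩ := hdvd
  have hcpos : 0 < c := by
    rcases Nat.eq_zero_or_pos c with rfl | h; · omega
    · exact h
  have hsld : s.length / d = ℓ * c := by
    rw [hslen, hc, Nat.mul_comm d c, ← Nat.mul_assoc, Nat.mul_div_cancel _ hdpos]
  have hqd : q = lpow (s.take d) c := by
    have htk := take_lpow (s.take d) (j := c) (e := s.length / d)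
      (by rw [hsld]; exact Nat.le_mul_of_pos_left _ hl)
    rw [htlen, ← hsd] at htk
    rw [← hq_take, hc, Nat.mul_comm d c, htk]
  by_contra hne
  have hdlt : d < q.length := lt_of_le_of_ne hdl hne
  apply hq
  refine ⟨s.take d, c, ?_, by omega, hqd⟩
  rcases Nat.lt_or_ge c 2 with h | h
  · interval_cases c <;> omega
  · exact h

lemma take_minPer_lpow (q : List ℕ) (hq : IsPrimitiveWord q) (hqn : q ≠ []) {ℓ : ℕ}
    (hl : 0 < ℓ) : (lpow q ℓ).take (minPer (lpow q ℓ)) = q := by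
  rw [minPer_lpow q hq hqn hl]; exact take_one_lpow q hl

/-- Rotating commutes with the "is a fixed point of rotate k" property. -/
lemma rotate_eq_self_rotate (s : List ℕ) (i k : ℕ) :
    (s.rotate i).rotate k = s.rotate i ↔ s.rotate k = s := by
  constructor
  · intro h
    have h2 : (s.rotate k).rotate i = s.rotate i := by
      rw [List.rotate_rotate, Nat.add_comm, ← List.rotate_rotate, h]
    exact List.rotate_injective i h2
  · intro h
    rw [List.rotate_rotate, Nat.add_comm, ← List.rotate_rotate, h]

lemma minPer_rotate (s : List ℕ) (i : ℕ) : minPer (s.rotate i) = minPer s := by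
  apply le_antisymm
  · exact Nat.find_min' _ ⟨minPer_pos s, (rotate_eq_self_rotate s i _).2 (rotate_minPer s)⟩
  · exact Nat.find_min' _ ⟨minPer_pos _,
      (rotate_eq_self_rotate s i _).1 (rotate_minPer (s.rotate i))⟩

lemma prim_rotate_iff (s : List ℕ) (i : ℕ) :
    IsPrimitiveWord (s.rotate i) ↔ IsPrimitiveWord s := by
  rcases eq_or_ne s [] with rfl | hs
  · simp
  · have hsr : s.rotate i ≠ [] := by
      intro h
      exact hs (by simpa using congrArg List.length h)
    rw [prim_iff _ hs, prim_iff _ hsr, minPer_rotate, List.length_rotate]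

lemma prim_of_isRotated {s t : List ℕ} (h : s.IsRotated t) (hp : IsPrimitiveWord s) :
    IsPrimitiveWord t := by
  obtain ⟨i, rfl⟩ := h
  exact (prim_rotate_iff s i).2 hp

lemma rotate_sub_of_rotate_eq {s : List ℕ} {k j : ℕ} (hkj : k ≤ j)
    (h : s.rotate k = s.rotate j) : s.rotate (j - k) = s := by
  have h' : (s.rotate k).rotate (j - k) = s.rotate k := by
    rw [List.rotate_rotate, show k + (j - k) = j by omega, ← h]
  exact (rotate_eq_self_rotate s k (j - k)).1 h'

/-- distinct small rotations of a primitive word are distinct -/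
lemma rotate_inj_of_prim {s : List ℕ} (hp : IsPrimitiveWord s) (hs : s ≠ [])
    {k j : ℕ} (hk : k < s.length) (hj : j < s.length) (h : s.rotate k = s.rotate j) : k = j := by
  have hmp : minPer s = s.length := (prim_iff s hs).1 hp
  rcases Nat.le_total k j with hle | hle
  · rcases Nat.eq_or_lt_of_le hle with rfl | hlt
    · rfl
    · have h3 := rotate_sub_of_rotate_eq hle h
      have := Nat.le_of_dvd (by omega) (minPer_dvd s h3)
      omega
  · rcases Nat.eq_or_lt_of_le hle with rfl | hlt
    · rfl
    · have h3 := rotate_sub_of_rotate_eq hle h.symm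
      have := Nat.le_of_dvd (by omega) (minPer_dvd s h3)
      omega

end NeckAux

namespace NeckAux

lemma mycard_sigma {ι : Type*} [Fintype ι] (f : ι → Type*) [∀ i, Finite (f i)] :
    Nat.card ((i : ι) × f i) = ∑ i, Nat.card (f i) := by
  classical
  have : ∀ i, Fintype (f i) := fun i => Fintype.ofFinite (f i)
  simp only [Nat.card_eq_fintype_card]
  exact Fintype.card_sigma

/-- words of given length over `{0,…,m-1}` as functions. -/
def wordEquiv (n m : ℕ) : {s : List ℕ // s.length = n ∧ ∀ c ∈ s, c < m} ≃ (Fin n → Fin m) where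
  toFun s k := ⟨s.1[(k : ℕ)]'(by rw [s.2.1]; exact k.2), s.2.2 _ (List.getElem_mem _)⟩
  invFun v := ⟨List.ofFn (fun k => (v k : ℕ)), by simp, by
    intro c hc
    rw [List.mem_ofFn] at hc
    obtain ⟨k, rfl⟩ := hc
    exact (v k).2⟩
  left_inv s := Subtype.ext (by
    apply List.ext_getElem (by simp [s.2.1])
    intro i h1 h2
    simp)
  right_inv v := funext fun k => Fin.ext (by simp)

lemma count_ofFn (n m : ℕ) (v : Fin n → Fin m) (i : Fin m) :
    (List.ofFn (fun k => (v k : ℕ))).count (i : ℕ) = Fintype.card {k // v k = i} := by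
  classical
  rw [List.ofFn_eq_map, List.count_eq_countP, List.countP_map, Fintype.card_subtype]
  rw [show (Finset.filter (fun k => v k = i) Finset.univ).card
      = ((List.finRange n).filter (fun k => decide (v k = i))).length from rfl]
  rw [List.countP_eq_length_filter]
  congr 1
  apply List.filter_congr
  intro k _
  show ((v k : ℕ) == (i : ℕ)) = decide (v k = i)
  by_cases h : v k = i
  · subst h; simp
  · have h2 : ((v k : ℕ) ≠ (i : ℕ)) := fun hc => h (Fin.ext hc)
    simp [h, h2]

lemma count_word (n m : ℕ) (s : {s : List ℕ // s.length = n ∧ ∀ c ∈ s, c < m}) (i : Fin m) :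
    s.1.count (i : ℕ) = Fintype.card {k // wordEquiv n m s k = i} := by
  conv_lhs => rw [← (wordEquiv n m).left_inv s]
  exact count_ofFn n m (wordEquiv n m s) i

/-- the canonical word with given letter counts -/
def baseList (m : ℕ) (b : Fin m → ℕ) : List ℕ :=
  (List.ofFn (fun i : Fin m => List.replicate (b i) (i : ℕ))).flatten

lemma baseList_length (m : ℕ) (b : Fin m → ℕ) : (baseList m b).length = ∑ i, b i := by
  simp [baseList, List.length_flatten, List.map_ofFn, Function.comp_def, List.sum_ofFn]

lemma baseList_mem (m : ℕ) (b : Fin m → ℕ) : ∀ c ∈ baseList m b, c < m := by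
  intro c hc
  rcases List.mem_flatten.1 hc with ⟨t, ht, hct⟩
  rw [List.mem_ofFn] at ht
  obtain ⟨i, rfl⟩ := ht
  rw [List.eq_of_mem_replicate hct]
  exact i.2

lemma baseList_count (m : ℕ) (b : Fin m → ℕ) (i : Fin m) :
    (baseList m b).count (i : ℕ) = b i := by
  classical
  rw [baseList, List.count_flatten, List.map_ofFn]
  rw [List.sum_ofFn]
  simp only [Function.comp_apply, List.count_replicate]
  rw [Finset.sum_congr rfl (g := fun j => if j = i then b j else 0) (fun j _ => by
    by_cases h : j = i
    · subst h; simp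
    · have h2 : ((j : ℕ) == (i : ℕ)) = false := by
        rw [beq_eq_false_iff_ne]
        exact fun hc => h (Fin.ext hc)
      rw [h2]
      simp [h])]
  simp




def bigEquiv (n m : ℕ) (b : Fin m → ℕ) :
    {s : List ℕ // s.length = n ∧ (∀ c ∈ s, c < m) ∧ ∀ i : Fin m, s.count (i : ℕ) = b i} ≃
    {v : Fin n → Fin m // ∀ i : Fin m, Fintype.card {k // v k = i} = b i} where
  toFun s := ⟨wordEquiv n m ⟨s.1, s.2.1, s.2.2.1⟩, fun i =>
    (count_word n m ⟨s.1, s.2.1, s.2.2.1⟩ i).symm.trans (s.2.2.2 i)⟩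
  invFun v := ⟨((wordEquiv n m).symm v.1).1,
    ((wordEquiv n m).symm v.1).2.1, ((wordEquiv n m).symm v.1).2.2, fun i => by
      rw [count_word n m _ i, Equiv.apply_symm_apply]
      exact v.2 i⟩
  left_inv s := by
    apply Subtype.ext
    show ((wordEquiv n m).symm ((wordEquiv n m) ⟨s.1, s.2.1, s.2.2.1⟩)).1 = s.1
    rw [Equiv.symm_apply_apply]
  right_inv v := Subtype.ext ((wordEquiv n m).apply_symm_apply v.1)

lemma card_fv (n m : ℕ) (b : Fin m → ℕ) (hb : ∑ i, b i = n) :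
    Nat.card {v : Fin n → Fin m // ∀ i : Fin m, Fintype.card {k // v k = i} = b i}
      * ∏ i, (b i).factorial = n.factorial := by
  classical
  set FV := {v : Fin n → Fin m // ∀ i : Fin m, Fintype.card {k // v k = i} = b i} with hFV
  set w0 : Fin n → Fin m :=
    wordEquiv n m ⟨baseList m b, by rw [baseList_length, hb], baseList_mem m b⟩ with hw0def
  have hw0 : ∀ i, Fintype.card {k // w0 k = i} = b i := fun i =>
    (count_word n m ⟨baseList m b, by rw [baseList_length, hb], baseList_mem m b⟩ i).symm.trans
      (baseList_count m b i)
  set Φ : Equiv.Perm (Fin n) → FV := fun σ => ⟨w0 ∘ σ, fun i => by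
    rw [← hw0 i]
    exact Fintype.card_congr (Equiv.subtypeEquiv σ (fun k => Iff.rfl))⟩ with hΦ
  have hsurj : Function.Surjective Φ := by
    intro v
    have e : ∀ i, {k // v.1 k = i} ≃ {k // w0 k = i} := fun i =>
      Fintype.equivOfCardEq (by rw [v.2 i, hw0 i])
    exact ⟨Equiv.ofFiberEquiv e, Subtype.ext (funext fun k => Equiv.ofFiberEquiv_map e k)⟩
  have hfib : ∀ v : FV, Nat.card {σ : Equiv.Perm (Fin n) // Φ σ = v} = ∏ i, (b i).factorial := by
    intro v
    obtain ⟨σ₀, hσ₀⟩ := hsurj v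
    have h2 : w0 ∘ σ₀ = v.1 := congrArg Subtype.val hσ₀
    have E2 : {σ : Equiv.Perm (Fin n) // Φ σ = v} ≃
        {g : Equiv.Perm (Fin n) // w0 ∘ g = w0} :=
      { toFun := fun σ => ⟨σ₀.symm.trans σ.1, by
          have h1 : w0 ∘ σ.1 = v.1 := congrArg Subtype.val σ.2
          funext x
          show w0 (σ.1 (σ₀.symm x)) = w0 x
          calc w0 (σ.1 (σ₀.symm x)) = v.1 (σ₀.symm x) := congrFun h1 _
          _ = w0 (σ₀ (σ₀.symm x)) := (congrFun h2 _).symm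
          _ = w0 x := by rw [Equiv.apply_symm_apply]⟩
        invFun := fun g => ⟨σ₀.trans g.1, Subtype.ext (funext fun x => by
          show w0 (g.1 (σ₀ x)) = v.1 x
          calc w0 (g.1 (σ₀ x)) = w0 (σ₀ x) := congrFun g.2 _
          _ = v.1 x := congrFun h2 _)⟩
        left_inv := fun σ => Subtype.ext (by ext x; simp)
        right_inv := fun g => Subtype.ext (by ext x; simp) }
    rw [Nat.card_congr E2, Nat.card_eq_fintype_card, DomMulAct.stabilizer_card w0]
    exact Finset.prod_congr rfl fun i _ => by rw [hw0 i]
  haveI : Fintype FV := Fintype.ofFinite _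
  have htot : Nat.card (Equiv.Perm (Fin n)) = ∑ v : FV, Nat.card {σ // Φ σ = v} := by
    rw [← mycard_sigma]
    exact Nat.card_congr (Equiv.sigmaFiberEquiv Φ).symm
  rw [Nat.card_eq_fintype_card, Fintype.card_perm, Fintype.card_fin] at htot
  rw [Finset.sum_congr rfl (fun v _ => hfib v), Finset.sum_const, Finset.card_univ,
    smul_eq_mul] at htot
  rw [Nat.card_eq_fintype_card]
  exact htot.symm

lemma card_words (n m : ℕ) (b : Fin m → ℕ) (hb : ∑ i, b i = n) :
    Nat.card {s : List ℕ // s.length = n ∧ (∀ c ∈ s, c < m) ∧ ∀ i : Fin m, s.count (i : ℕ) = b i}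
      * ∏ i, (b i).factorial = n.factorial := by
  rw [Nat.card_congr (bigEquiv n m b)]
  exact card_fv n m b hb

end NeckAux

namespace NeckAux

lemma lpow_def (q : List ℕ) (r : ℕ) : (List.replicate r q).flatten = lpow q r := rfl

lemma lpow_add (q : List ℕ) (x y : ℕ) : lpow q (x + y) = lpow q x ++ lpow q y := by
  induction x with
  | zero => simp
  | succ x ih => rw [Nat.succ_add, lpow_succ, lpow_succ, ih, List.append_assoc]

lemma lpow_lpow (q : List ℕ) (r e : ℕ) : lpow (lpow q r) e = lpow q (r * e) := by
  induction e with
  | zero => simp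
  | succ e ih => rw [lpow_succ, ih, Nat.mul_succ, Nat.add_comm, lpow_add]

lemma prim_take_minPer (s : List ℕ) (hs : s ≠ []) : IsPrimitiveWord (s.take (minPer s)) := by
  have hpos : 0 < s.length := List.length_pos_of_ne_nil hs
  set d := minPer s with hd
  have hdpos : 0 < d := minPer_pos s
  have hdvd : d ∣ s.length := minPer_dvd_length s
  have hdle : d ≤ s.length := Nat.le_of_dvd hpos hdvd
  have htlen : (s.take d).length = d := by rw [List.length_take]; omega
  have hsd : s = lpow (s.take d) (s.length / d) :=
    eq_lpow_of_rotate s d hdpos hdvd (rotate_minPer s)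
  rintro ⟨u, r, hr, hul, hteq⟩
  rw [htlen] at hul
  rw [lpow_def] at hteq
  have hdu : d = r * u.length := by
    have := congrArg List.length hteq
    rwa [htlen, length_lpow] at this
  have hu0 : 0 < u.length := by
    rcases Nat.eq_zero_or_pos u.length with h | h
    · rw [h, Nat.mul_zero] at hdu; omega
    · exact h
  have hepos : 0 < s.length / d := Nat.div_pos hdle hdpos
  have hrot : s.rotate u.length = s := by
    conv_lhs => rw [hsd, hteq, lpow_lpow]
    conv_rhs => rw [hsd, hteq, lpow_lpow]
    exact rotate_lpow u (by positivity)
  have := Nat.le_of_dvd hu0 (minPer_dvd s hrot)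
  omega

lemma card_words_eq_sum (n m : ℕ) (a : Fin m → ℕ) (hn : 0 < n) (hsum : ∑ i, a i = n)
    (hg : Finset.univ.gcd a ≠ 0) :
    Nat.card {s : List ℕ // s.length = n ∧ (∀ c ∈ s, c < m) ∧ ∀ i : Fin m, s.count (i:ℕ) = a i}
      = ∑ ℓ ∈ (Finset.univ.gcd a).divisors,
          Nat.card {q : List ℕ // (q.length = n / ℓ ∧ (∀ c ∈ q, c < m) ∧
            ∀ i : Fin m, q.count (i:ℕ) = a i / ℓ) ∧ IsPrimitiveWord q} := by
  classical
  set g := Finset.univ.gcd a with hgdef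
  have hgdvd : ∀ i, g ∣ a i := fun i => Finset.gcd_dvd (Finset.mem_univ i)
  have hgn : g ∣ n := hsum ▸ Finset.dvd_sum (fun i _ => hgdvd i)
  haveI : Finite {s : List ℕ // s.length = n ∧ ∀ c ∈ s, c < m} :=
    Finite.of_equiv _ (wordEquiv n m).symm
  set W := {s : List ℕ // s.length = n ∧ (∀ c ∈ s, c < m) ∧
    ∀ i : Fin m, s.count (i:ℕ) = a i} with hW
  haveI : Finite W := Finite.of_injective
    (fun s : W => (⟨s.1, s.2.1, s.2.2.1⟩ : {s : List ℕ // s.length = n ∧ ∀ c ∈ s, c < m}))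
    (fun x y h => Subtype.ext (congrArg
      (fun t : {s : List ℕ // s.length = n ∧ ∀ c ∈ s, c < m} => t.1) h))
  -- basic facts about elements of W
  have hWfact : ∀ s : W, s.1 ≠ [] ∧ minPer s.1 ∣ n ∧
      s.1 = lpow (s.1.take (minPer s.1)) (n / minPer s.1) := by
    intro s
    obtain ⟨hlen, hmem, hcnt⟩ := s.2
    have hsne : s.1 ≠ [] := by
      intro h; rw [h] at hlen; simp at hlen; omega
    have hdvd : minPer s.1 ∣ n := by
      have h := minPer_dvd_length s.1
      rwa [hlen] at h
    refine ⟨hsne, hdvd, ?_⟩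
    have := eq_lpow_of_rotate s.1 (minPer s.1) (minPer_pos s.1)
      (minPer_dvd_length s.1) (rotate_minPer s.1)
    rwa [hlen] at this
  have hFmem : ∀ s : W, n / minPer s.1 ∈ g.divisors := by
    intro s
    obtain ⟨hsne, hdvd, hsd⟩ := hWfact s
    obtain ⟨hlen, hmem, hcnt⟩ := s.2
    refine Nat.mem_divisors.2 ⟨Finset.dvd_gcd (fun i _ => ?_), hg⟩
    have : a i = (n / minPer s.1) * (s.1.take (minPer s.1)).count (i:ℕ) := by
      rw [← hcnt i]
      conv_lhs => rw [hsd]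
      rw [count_lpow]
    exact ⟨_, this⟩
  set F : W → {ℓ // ℓ ∈ g.divisors} := fun s => ⟨n / minPer s.1, hFmem s⟩ with hF
  rw [Nat.card_congr (Equiv.sigmaFiberEquiv F).symm, mycard_sigma,
    ← Finset.sum_coe_sort g.divisors]
  apply Finset.sum_congr rfl
  intro x _
  obtain ⟨ℓ, hℓ⟩ := x
  have hℓg : ℓ ∣ g := (Nat.mem_divisors.1 hℓ).1
  have hℓ0 : 0 < ℓ := Nat.pos_of_mem_divisors hℓ
  have hℓn : ℓ ∣ n := hℓg.trans hgn
  have hnl0 : 0 < n / ℓ := Nat.div_pos (Nat.le_of_dvd hn hℓn) hℓ0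
  apply Nat.card_congr
  refine ⟨fun sp => ⟨sp.1.1.take (minPer sp.1.1), ?_⟩,
    fun q => ⟨⟨lpow q.1 ℓ, ?_⟩, ?_⟩, ?_, ?_⟩
  · -- toFun well-defined
    obtain ⟨s, hsF⟩ := sp
    obtain ⟨hsne, hdvd, hsd⟩ := hWfact s
    obtain ⟨hlen, hmem, hcnt⟩ := s.2
    have hval : n / minPer s.1 = ℓ := congrArg Subtype.val hsF
    have hd0 : 0 < minPer s.1 := minPer_pos s.1
    have hdle : minPer s.1 ≤ n := Nat.le_of_dvd hn hdvd
    have hdval : minPer s.1 = n / ℓ := by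
      rw [← hval, Nat.div_div_self hdvd (by omega)]
    refine ⟨⟨?_, fun c hc => hmem c (List.take_subset _ _ hc), fun i => ?_⟩, ?_⟩
    · rw [List.length_take, hlen, hdval]
      exact Nat.min_eq_left (Nat.div_le_self n ℓ)
    · have h1 : a i = ℓ * (s.1.take (minPer s.1)).count (i:ℕ) := by
        rw [← hcnt i]
        conv_lhs => rw [hsd]
        rw [count_lpow, hval]
      rw [h1, Nat.mul_div_cancel_left _ hℓ0]
    · exact prim_take_minPer s.1 hsne
  · -- invFun list is in W
    obtain ⟨q, ⟨hqlen, hqmem, hqcnt⟩, hqprim⟩ := q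
    refine ⟨?_, fun c hc => hqmem c ((mem_lpow hℓ0).1 hc), fun i => ?_⟩
    · rw [length_lpow, hqlen, Nat.mul_div_cancel' hℓn]
    · rw [count_lpow, hqcnt i, Nat.mul_div_cancel' (hℓg.trans (hgdvd i))]
  · -- invFun F-value
    obtain ⟨q, ⟨hqlen, hqmem, hqcnt⟩, hqprim⟩ := q
    have hqne : q ≠ [] := by
      intro h; rw [h] at hqlen; simp at hqlen; omega
    apply Subtype.ext
    show n / minPer (lpow q ℓ) = ℓ
    rw [minPer_lpow q hqprim hqne hℓ0, hqlen, Nat.div_div_self hℓn (by omega)]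
  · -- left_inv
    intro sp
    obtain ⟨s, hsF⟩ := sp
    obtain ⟨hsne, hdvd, hsd⟩ := hWfact s
    have hval : n / minPer s.1 = ℓ := congrArg Subtype.val hsF
    apply Subtype.ext
    apply Subtype.ext
    show lpow (s.1.take (minPer s.1)) ℓ = s.1
    conv_rhs => rw [hsd]
    rw [hval]
  · -- right_inv
    intro q
    obtain ⟨q, ⟨hqlen, hqmem, hqcnt⟩, hqprim⟩ := q
    have hqne : q ≠ [] := by
      intro h; rw [h] at hqlen; simp at hqlen; omega
    apply Subtype.ext
    show (lpow q ℓ).take (minPer (lpow q ℓ)) = q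
    exact take_minPer_lpow q hqprim hqne hℓ0

end NeckAux


namespace NeckAux

lemma card_prim_words (n m : ℕ) (a : Fin m → ℕ) (hn : 0 < n) :
    Nat.card {s : List ℕ // (s.length = n ∧ (∀ c ∈ s, c < m) ∧
        ∀ i : Fin m, s.count (i:ℕ) = a i) ∧ IsPrimitiveWord s}
      = n * Nat.card {x : Necklace // ∃ s : List ℕ,
          Quotient.mk (List.IsRotated.setoid ℕ) s = x ∧ s.length = n ∧ (∀ c ∈ s, c < m) ∧
          IsPrimitiveWord s ∧ ∀ i : Fin m, s.count (i : ℕ) = a i} := by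
  classical
  haveI : Finite {s : List ℕ // s.length = n ∧ ∀ c ∈ s, c < m} :=
    Finite.of_equiv _ (wordEquiv n m).symm
  set PW := {s : List ℕ // (s.length = n ∧ (∀ c ∈ s, c < m) ∧
    ∀ i : Fin m, s.count (i:ℕ) = a i) ∧ IsPrimitiveWord s} with hPW
  set NK := {x : Necklace // ∃ s : List ℕ,
    Quotient.mk (List.IsRotated.setoid ℕ) s = x ∧ s.length = n ∧ (∀ c ∈ s, c < m) ∧
    IsPrimitiveWord s ∧ ∀ i : Fin m, s.count (i : ℕ) = a i} with hNK
  haveI : Finite PW := Finite.of_injective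
    (fun s : PW => (⟨s.1, s.2.1.1, s.2.1.2.1⟩ : {s : List ℕ // s.length = n ∧ ∀ c ∈ s, c < m}))
    (fun x y h => Subtype.ext (congrArg
      (fun t : {s : List ℕ // s.length = n ∧ ∀ c ∈ s, c < m} => t.1) h))
  set G : PW → NK := fun s => ⟨Quotient.mk (List.IsRotated.setoid ℕ) s.1,
    ⟨s.1, rfl, s.2.1.1, s.2.1.2.1, s.2.2, s.2.1.2.2⟩⟩ with hG
  have hGsurj : Function.Surjective G := by
    intro x
    obtain ⟨s, hmk, hlen, hmem, hprim, hcnt⟩ := x.2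
    exact ⟨⟨s, ⟨hlen, hmem, hcnt⟩, hprim⟩, Subtype.ext hmk⟩
  haveI : Finite NK := Finite.of_surjective G hGsurj
  haveI : Fintype NK := Fintype.ofFinite _
  rw [Nat.card_congr (Equiv.sigmaFiberEquiv G).symm, mycard_sigma]
  have hfib : ∀ x : NK, Nat.card {s : PW // G s = x} = n := by
    intro x
    obtain ⟨s₀, hs₀⟩ := hGsurj x
    have hs₀len : s₀.1.length = n := s₀.2.1.1
    have hs₀ne : s₀.1 ≠ [] := by
      intro h; rw [h] at hs₀len; simp at hs₀len; omega
    have hval : Quotient.mk (List.IsRotated.setoid ℕ) s₀.1 = x.1 :=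
      congrArg Subtype.val hs₀
    set f : Fin n → {s : PW // G s = x} := fun k =>
      ⟨⟨s₀.1.rotate k, ⟨by simp [hs₀len], fun c hc => s₀.2.1.2.1 c (List.mem_rotate.1 hc),
          fun i => by rw [(List.rotate_perm s₀.1 k).count_eq]; exact s₀.2.1.2.2 i⟩,
          (prim_rotate_iff s₀.1 k).2 s₀.2.2⟩, by
        apply Subtype.ext
        show Quotient.mk (List.IsRotated.setoid ℕ) (s₀.1.rotate (k:ℕ)) = x.1
        rw [← hval]
        exact Quotient.sound (List.IsRotated.forall s₀.1 k)⟩ with hf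
    have hbij : Function.Bijective f := by
      constructor
      · intro k j h
        have h2 : s₀.1.rotate k = s₀.1.rotate j :=
          congrArg (fun z : {s : PW // G s = x} => z.1.1) h
        exact Fin.ext (rotate_inj_of_prim s₀.2.2 hs₀ne
          (by rw [hs₀len]; exact k.2) (by rw [hs₀len]; exact j.2) h2)
      · intro sp
        have hq : Quotient.mk (List.IsRotated.setoid ℕ) sp.1.1 = x.1 :=
          congrArg Subtype.val sp.2
        have hrel : s₀.1.IsRotated sp.1.1 :=
          (Quotient.exact (hq.trans hval.symm)).symm
        obtain ⟨k, hk⟩ := hrel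
        refine ⟨⟨k % n, Nat.mod_lt _ hn⟩, ?_⟩
        apply Subtype.ext
        apply Subtype.ext
        show s₀.1.rotate ((k % n : ℕ)) = sp.1.1
        have hmod : k % n = k % s₀.1.length := by rw [hs₀len]
        rw [hmod, List.rotate_mod]
        exact hk
    rw [Nat.card_congr (Equiv.ofBijective f hbij).symm, Nat.card_eq_fintype_card,
      Fintype.card_fin]
  rw [Finset.sum_congr rfl (fun x _ => hfib x), Finset.sum_const, Finset.card_univ,
    smul_eq_mul, Nat.card_eq_fintype_card, Nat.mul_comm]

end NeckAux

namespace NeckAux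

noncomputable def pwCard (n m : ℕ) (a : Fin m → ℕ) : ℕ :=
  Nat.card {q : List ℕ // (q.length = n ∧ (∀ c ∈ q, c < m) ∧
    ∀ i : Fin m, q.count (i:ℕ) = a i) ∧ IsPrimitiveWord q}

noncomputable def wCard (n m : ℕ) (a : Fin m → ℕ) : ℕ :=
  Nat.card {s : List ℕ // s.length = n ∧ (∀ c ∈ s, c < m) ∧
    ∀ i : Fin m, s.count (i:ℕ) = a i}

lemma pwCard_congr {n₁ n₂ m : ℕ} {b₁ b₂ : Fin m → ℕ} (h : n₁ = n₂) (hb : ∀ i, b₁ i = b₂ i) :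
    pwCard n₁ m b₁ = pwCard n₂ m b₂ := by
  subst h
  have : b₁ = b₂ := funext hb
  subst this
  rfl

lemma wCard_congr {n₁ n₂ m : ℕ} {b₁ b₂ : Fin m → ℕ} (h : n₁ = n₂) (hb : ∀ i, b₁ i = b₂ i) :
    wCard n₁ m b₁ = wCard n₂ m b₂ := by
  subst h
  have : b₁ = b₂ := funext hb
  subst this
  rfl

lemma wCard_eq_sum (n m : ℕ) (a : Fin m → ℕ) (hn : 0 < n) (hsum : ∑ i, a i = n)
    (hg : Finset.univ.gcd a ≠ 0) :
    wCard n m a = ∑ ℓ ∈ (Finset.univ.gcd a).divisors, pwCard (n / ℓ) m (fun i => a i / ℓ) :=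
  card_words_eq_sum n m a hn hsum hg

lemma wCard_val (n m : ℕ) (b : Fin m → ℕ) (hb : ∑ i, b i = n) :
    wCard n m b = n.factorial / ∏ i, (b i).factorial :=
  (Nat.div_eq_of_eq_mul_left (Nat.prod_factorial_pos _ _) (card_words n m b hb).symm).symm

lemma pwCard_eq (n m : ℕ) (a : Fin m → ℕ) (hn : 0 < n) :
    pwCard n m a = n * primNecklaceCount n m a :=
  card_prim_words n m a hn

end NeckAux

open NeckAux in
/-- If `a₁ + ⋯ + a_m = n` with every `a_i ≥ 1`, then
`n · L(a₁,…,a_m) = ∑_{ℓ ∣ gcd(a₁,…,a_m)} μ(ℓ) · (n/ℓ)! / ((a₁/ℓ)! ⋯ (a_m/ℓ)!)`. -/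
theorem primitive_necklace_count (n m : ℕ) (a : Fin m → ℕ)
    (ha : ∀ i, 1 ≤ a i) (hsum : ∑ i, a i = n) :
    (n : ℤ) * primNecklaceCount n m a
      = ∑ ℓ ∈ (Finset.univ.gcd a).divisors,
          ArithmeticFunction.moebius ℓ *
            (((n / ℓ).factorial / ∏ i : Fin m, (a i / ℓ).factorial : ℕ) : ℤ) := by
  classical
  rcases Nat.eq_zero_or_pos m with rfl | hm
  · have hn0 : n = 0 := by simpa using hsum.symm
    subst hn0
    rw [show (Finset.univ.gcd a) = 0 from by simp [Finset.univ_eq_empty]]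
    simp
  have hn : 0 < n := by
    have h1 : m ≤ ∑ i, a i := by
      calc m = ∑ _i : Fin m, 1 := by simp
      _ ≤ ∑ i, a i := Finset.sum_le_sum (fun i _ => ha i)
    omega
  set g := Finset.univ.gcd a with hgdef
  have hgdvd : ∀ i, g ∣ a i := fun i => Finset.gcd_dvd (Finset.mem_univ i)
  have hg0 : g ≠ 0 := by
    intro h
    have h1 := Finset.gcd_eq_zero_iff.1 h ⟨0, hm⟩ (Finset.mem_univ _)
    have h2 := ha ⟨0, hm⟩
    omega
  have hgn : g ∣ n := hsum ▸ Finset.dvd_sum (fun i _ => hgdvd i)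
  -- divisor-sum relation for Möbius inversion
  have hrel : ∀ t > 0, t ∈ {x : ℕ | x ∣ g} →
      ∑ d ∈ t.divisors, ((pwCard (n / (g / d)) m (fun i => a i / (g / d)) : ℤ))
        = ((wCard (n / (g / t)) m (fun i => a i / (g / t)) : ℤ)) := by
    intro t ht htg
    have htg : t ∣ g := htg
    set e := g / t with he
    have he_dvd : e ∣ g := Nat.div_dvd_of_dvd htg
    have heg : g / e = t := Nat.div_div_self htg hg0
    have he0 : 0 < e := Nat.div_pos (Nat.le_of_dvd (by omega) htg) ht
    have hea : ∀ i, e ∣ a i := fun i => he_dvd.trans (hgdvd i)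
    have hen : e ∣ n := he_dvd.trans hgn
    have hsum' : ∑ i, a i / e = n / e := by
      have h1 : e * ∑ i, a i / e = e * (n / e) := by
        rw [Finset.mul_sum, Finset.sum_congr rfl (fun i _ => Nat.mul_div_cancel' (hea i)),
          hsum, Nat.mul_div_cancel' hen]
      exact Nat.eq_of_mul_eq_mul_left he0 h1
    have hgcd' : Finset.univ.gcd (fun i => a i / e) = t := by
      have h1 : g = e * Finset.univ.gcd (fun i => a i / e) := by
        calc g = Finset.univ.gcd a := hgdef
        _ = Finset.univ.gcd (fun i => e * (a i / e)) := by
            apply congrArg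
            funext i
            exact (Nat.mul_div_cancel' (hea i)).symm
        _ = e * Finset.univ.gcd (fun i => a i / e) := by
            rw [Finset.gcd_mul_left]; simp
      have h2 : g / e = Finset.univ.gcd (fun i => a i / e) := by
        rw [h1, Nat.mul_div_cancel_left _ he0]
      exact h2.symm.trans heg
    have hdec := wCard_eq_sum (n / e) m (fun i => a i / e)
      (Nat.div_pos (Nat.le_of_dvd hn hen) he0) hsum' (by rw [hgcd']; omega)
    rw [hgcd'] at hdec
    have hterm : ∀ ℓ ∈ t.divisors,
        pwCard (n / e / ℓ) m (fun i => a i / e / ℓ)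
          = pwCard (n / (g / (t / ℓ))) m (fun i => a i / (g / (t / ℓ))) := by
      intro ℓ hℓt
      obtain ⟨hℓ, -⟩ := Nat.mem_divisors.1 hℓt
      have hℓ0 : 0 < ℓ := Nat.pos_of_mem_divisors hℓt
      have hkey : g / (t / ℓ) = e * ℓ := by
        obtain ⟨t', rfl⟩ := hℓ
        obtain ⟨g', hgg⟩ := htg
        have ht'0 : 0 < t' := by
          rcases Nat.eq_zero_or_pos t' with rfl | h
          · rw [Nat.mul_zero] at ht; omega
          · exact h
        have het : e = g' := by
          rw [he, hgg]
          exact Nat.div_eq_of_eq_mul_left ht (by ring)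
        rw [Nat.mul_div_cancel_left t' hℓ0, hgg, het]
        exact Nat.div_eq_of_eq_mul_left ht'0 (by ring)
      rw [hkey]
      exact pwCard_congr (Nat.div_div_eq_div_mul n e ℓ)
        (fun i => Nat.div_div_eq_div_mul (a i) e ℓ)
    rw [Finset.sum_congr rfl hterm] at hdec
    -- reindex d := t / ℓ
    have hre : ∑ ℓ ∈ t.divisors, pwCard (n / (g / (t / ℓ))) m (fun i => a i / (g / (t / ℓ)))
        = ∑ d ∈ t.divisors, pwCard (n / (g / d)) m (fun i => a i / (g / d)) :=
      Nat.sum_div_divisors t (fun d => pwCard (n / (g / d)) m (fun i => a i / (g / d)))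
    rw [hre] at hdec
    rw [← Nat.cast_sum]
    exact congrArg (Nat.cast : ℕ → ℤ) hdec.symm
  -- Möbius inversion
  have hinv := (ArithmeticFunction.sum_eq_iff_sum_mul_moebius_eq_on {x : ℕ | x ∣ g}
    (fun x y hxy hy => hxy.trans hy)).1 hrel g (by omega) dvd_rfl
  simp only [Int.cast_id] at hinv
  rw [Nat.sum_divisorsAntidiagonal
    (f := fun x y => (ArithmeticFunction.moebius x : ℤ) *
      (wCard (n / (g / y)) m (fun i => a i / (g / y)) : ℤ))] at hinv
  -- identify the two sides
  have hfg : wCard (n / (g / g)) m (fun i => a i / (g / g))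
      = wCard n m a := by
    apply wCard_congr
    · rw [Nat.div_self (by omega : 0 < g), Nat.div_one]
    · intro i; rw [Nat.div_self (by omega : 0 < g), Nat.div_one]
  have hpg : pwCard (n / (g / g)) m (fun i => a i / (g / g)) = pwCard n m a := by
    apply pwCard_congr
    · rw [Nat.div_self (by omega : 0 < g), Nat.div_one]
    · intro i; rw [Nat.div_self (by omega : 0 < g), Nat.div_one]
  rw [hpg] at hinv
  rw [pwCard_eq n m a hn] at hinv
  rw [show ((n : ℤ) * (primNecklaceCount n m a : ℤ))
      = ((n * primNecklaceCount n m a : ℕ) : ℤ) from by push_cast; ring, ← hinv]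
  apply Finset.sum_congr rfl
  intro ℓ hℓ
  obtain ⟨hℓg, -⟩ := Nat.mem_divisors.1 hℓ
  have hℓ0 : 0 < ℓ := Nat.pos_of_mem_divisors hℓ
  have hgg : g / (g / ℓ) = ℓ := Nat.div_div_self hℓg hg0
  have hℓn : ℓ ∣ n := hℓg.trans hgn
  have hℓa : ∀ i, ℓ ∣ a i := fun i => hℓg.trans (hgdvd i)
  have hsum' : ∑ i, a i / ℓ = n / ℓ := by
    have h1 : ℓ * ∑ i, a i / ℓ = ℓ * (n / ℓ) := by
      rw [Finset.mul_sum, Finset.sum_congr rfl (fun i _ => Nat.mul_div_cancel' (hℓa i)),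
        hsum, Nat.mul_div_cancel' hℓn]
    exact Nat.eq_of_mul_eq_mul_left hℓ0 h1
  have hw : wCard (n / (g / (g / ℓ))) m (fun i => a i / (g / (g / ℓ)))
      = wCard (n / ℓ) m (fun i => a i / ℓ) :=
    wCard_congr (by rw [hgg]) (fun i => by rw [hgg])
  rw [hw, wCard_val (n / ℓ) m (fun i => a i / ℓ) hsum']
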